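/- arXiv:1310.0337 — 2 statements merged into one kernel-verified Lean document; each statement's English description precedes it below -/
import Mathlib

section
/- For positive integers r and s, gcd(2^r + 1, 2^s + 1) equals 2^gcd(r,s) + 1 if both r/gcd(r,s) and s/gcd(r,s) are odd, and equals 1 otherwise. -/
/-- If `a ∣ b` then `2^a - 1 ∣ 2^b - 1`. -/
lemma aux_mersenne_dvd {a b : ℕ} (h : a ∣ b) : 2 ^ a - 1 ∣ 2 ^ b - 1 := by
  obtain ⟨k, rfl⟩ := h
  have := Nat.sub_dvd_pow_sub_pow (2 ^ a) 1 k
  simpa [one_pow, ← pow_mul] using this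

/-- `2^(2m) - 1 = (2^m + 1) * (2^m - 1)`. -/
lemma aux_factor (m : ℕ) : 2 ^ (2 * m) - 1 = (2 ^ m + 1) * (2 ^ m - 1) := by
  have hx : 1 ≤ 2 ^ m := Nat.one_le_two_pow
  rw [two_mul, pow_add]
  have hx2 : 1 ≤ 2 ^ m * 2 ^ m := Nat.one_le_iff_ne_zero.mpr (by positivity)
  zify [hx, hx2]
  ring

/-- A common divisor of `2^m - 1` and `2^n - 1` divides `2^gcd(m,n) - 1`. -/
lemma aux_order {g m n : ℕ} (hm : g ∣ 2 ^ m - 1) (hn : g ∣ 2 ^ n - 1) :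
    g ∣ 2 ^ Nat.gcd m n - 1 := by
  have key : ∀ k : ℕ, g ∣ 2 ^ k - 1 ↔ (2 : ZMod g) ^ k = 1 := by
    intro k
    have h1 : (1 : ℕ) ≤ 2 ^ k := Nat.one_le_two_pow
    have h2 : ((2 ^ k - 1 : ℕ) : ZMod g) = (2 : ZMod g) ^ k - 1 := by
      push_cast [Nat.cast_sub h1]
      ring
    rw [← ZMod.natCast_eq_zero_iff, h2, sub_eq_zero]
  rw [key] at hm hn ⊢
  have dm := orderOf_dvd_of_pow_eq_one hm
  have dn := orderOf_dvd_of_pow_eq_one hn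
  exact orderOf_dvd_iff_pow_eq_one.mp (Nat.dvd_gcd dm dn)

theorem gcd_two_pow_add_one_add_one (r s : ℕ) (hr : 0 < r) (hs : 0 < s) :
    (Odd (r / Nat.gcd r s) ∧ Odd (s / Nat.gcd r s) →
      Nat.gcd (2 ^ r + 1) (2 ^ s + 1) = 2 ^ Nat.gcd r s + 1) ∧
    (¬(Odd (r / Nat.gcd r s) ∧ Odd (s / Nat.gcd r s)) →
      Nat.gcd (2 ^ r + 1) (2 ^ s + 1) = 1) := by
  set d := Nat.gcd r s with hd
  have hd0 : 0 < d := Nat.gcd_pos_of_pos_left s hr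
  have hdr : d ∣ r := Nat.gcd_dvd_left r s
  have hds : d ∣ s := Nat.gcd_dvd_right r s
  set g := Nat.gcd (2 ^ r + 1) (2 ^ s + 1) with hg
  have hgr : g ∣ 2 ^ r + 1 := Nat.gcd_dvd_left _ _
  have hgs : g ∣ 2 ^ s + 1 := Nat.gcd_dvd_right _ _
  -- g is odd
  have hodd : Odd g := by
    rcases Nat.even_or_odd g with he | ho
    · exfalso
      have h2 : 2 ∣ 2 ^ r + 1 := dvd_trans he.two_dvd hgr
      have : 2 ∣ 2 ^ r := dvd_pow_self 2 hr.ne'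
      omega
    · exact ho
  -- g divides 2^(2r)-1 and 2^(2s)-1
  have dvd_two : ∀ m : ℕ, g ∣ 2 ^ m + 1 → g ∣ 2 ^ (2 * m) - 1 := by
    intro m hgm
    rw [aux_factor m]
    exact dvd_mul_of_dvd_left hgm _
  have h2r := dvd_two r hgr
  have h2s := dvd_two s hgs
  have hgcd2 : Nat.gcd (2 * r) (2 * s) = 2 * d := Nat.gcd_mul_left 2 r s
  have hgd : g ∣ 2 ^ (2 * d) - 1 := by
    have := aux_order h2r h2s
    rwa [hgcd2] at this
  -- g is coprime to 2^d - 1 (since 2^d - 1 ∣ 2^r - 1, and gcd(g, 2^r-1) ∣ 2 and odd)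
  have hcop : Nat.Coprime g (2 ^ d - 1) := by
    have hdvd1 : 2 ^ d - 1 ∣ 2 ^ r - 1 := aux_mersenne_dvd hdr
    have hcop1 : Nat.Coprime g (2 ^ r - 1) := by
      set c := Nat.gcd g (2 ^ r - 1) with hc
      have hcg : c ∣ g := Nat.gcd_dvd_left _ _
      have hc1 : c ∣ 2 ^ r + 1 := hcg.trans hgr
      have hc2 : c ∣ 2 ^ r - 1 := Nat.gcd_dvd_right _ _
      have h1 : 1 ≤ 2 ^ r := Nat.one_le_two_pow
      have hc3 : c ∣ 2 := by
        have := Nat.dvd_sub hc1 hc2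
        have heq : 2 ^ r + 1 - (2 ^ r - 1) = 2 := by omega
        rwa [heq] at this
      have hcodd : ¬ 2 ∣ c := by
        intro h2c
        have : 2 ∣ g := h2c.trans hcg
        exact (Nat.not_even_iff_odd.mpr hodd) (even_iff_two_dvd.mpr this)
      rcases (Nat.Prime.eq_one_or_self_of_dvd Nat.prime_two c hc3) with h | h
      · exact h
      · rw [h] at hcodd; exact absurd dvd_rfl hcodd
    exact Nat.Coprime.coprime_dvd_right hdvd1 hcop1
  -- hence g ∣ 2^d + 1
  have hgdvd : g ∣ 2 ^ d + 1 := by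
    have hfac : g ∣ (2 ^ d + 1) * (2 ^ d - 1) := by rwa [aux_factor d] at hgd
    exact (Nat.Coprime.dvd_of_dvd_mul_right hcop) hfac
  constructor
  · rintro ⟨hor, hos⟩
    -- 2^d + 1 divides both 2^r + 1 and 2^s + 1
    have key : ∀ m : ℕ, d ∣ m → Odd (m / d) → 2 ^ d + 1 ∣ 2 ^ m + 1 := by
      intro m hdm hom
      have := Odd.nat_add_dvd_pow_add_pow (2 ^ d) 1 hom
      rw [one_pow, ← pow_mul, Nat.mul_div_cancel' hdm] at this
      exact this
    have h1 : 2 ^ d + 1 ∣ g := Nat.dvd_gcd (key r hdr hor) (key s hds hos)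
    exact Nat.dvd_antisymm hgdvd h1
  · intro hnot
    -- one of r/d, s/d is even
    have hev : Even (r / d) ∨ Even (s / d) := by
      rcases Nat.even_or_odd (r / d) with h | h
      · exact Or.inl h
      rcases Nat.even_or_odd (s / d) with h' | h'
      · exact Or.inr h'
      exact absurd ⟨h, h'⟩ hnot
    have main : ∀ m : ℕ, d ∣ m → Even (m / d) → g ∣ 2 ^ m + 1 → g = 1 := by
      intro m hdm hem hgm
      have h2dm : 2 * d ∣ m := by
        obtain ⟨k, hk⟩ := hem
        obtain ⟨q, hq⟩ := hdm
        have : q = m / d := by rw [hq]; exact (Nat.mul_div_cancel_left q hd0).symm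
        refine ⟨k, ?_⟩
        rw [hq, this, hk]; ring
      have hdvd : 2 ^ (2 * d) - 1 ∣ 2 ^ m - 1 := aux_mersenne_dvd h2dm
      have hd1 : 2 ^ d + 1 ∣ 2 ^ (2 * d) - 1 := by
        rw [aux_factor d]; exact dvd_mul_right _ _
      have hgm1 : g ∣ 2 ^ m - 1 := hgdvd.trans (hd1.trans hdvd)
      have h1 : 1 ≤ 2 ^ m := Nat.one_le_two_pow
      have hg2 : g ∣ 2 := by
        have := Nat.dvd_sub hgm hgm1
        have heq : 2 ^ m + 1 - (2 ^ m - 1) = 2 := by omega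
        rwa [heq] at this
      have hgodd : ¬ 2 ∣ g := fun h => (Nat.not_even_iff_odd.mpr hodd) (even_iff_two_dvd.mpr h)
      rcases (Nat.Prime.eq_one_or_self_of_dvd Nat.prime_two g hg2) with h | h
      · exact h
      · rw [h] at hgodd; exact absurd dvd_rfl hgodd
    rcases hev with h | h
    · exact main r hdr h hgr
    · exact main s hds h hgs
end

section
/- Let m and k be odd positive integers with t = gcd(m, k), n = 2m, s = 2^k + 1, and d = s(2^m - 1) + 1. Then gcd(d, 2^n - 1) = 1, gcd(s, 2^m + 1) = 2^t + 1 > 1, and gcd(s - 1, 2^m + 1) = 1. -/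
private lemma two_pow_sub_one_dvd' {a b : ℕ} (h : a ∣ b) : (2:ℕ) ^ a - 1 ∣ 2 ^ b - 1 := by
  obtain ⟨c, rfl⟩ := h
  simpa [pow_mul] using Nat.sub_dvd_pow_sub_pow (2 ^ a) 1 c

private lemma dvd_iff_pow_eq_one (e c : ℕ) : e ∣ 2 ^ c - 1 ↔ (2 : ZMod e) ^ c = 1 := by
  have h1 : 1 ≤ 2 ^ c := Nat.one_le_two_pow
  rw [← ZMod.natCast_eq_zero_iff]
  rw [Nat.cast_sub h1]
  push_cast
  rw [sub_eq_zero]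

private lemma dvd_two_pow_gcd_sub_one {e a b : ℕ} (ha : e ∣ 2 ^ a - 1) (hb : e ∣ 2 ^ b - 1) :
    e ∣ 2 ^ Nat.gcd a b - 1 := by
  rw [dvd_iff_pow_eq_one] at ha hb ⊢
  exact orderOf_dvd_iff_pow_eq_one.mp
    (Nat.dvd_gcd (orderOf_dvd_of_pow_eq_one ha) (orderOf_dvd_of_pow_eq_one hb))

private lemma prod_eq {c : ℕ} : ((2:ℕ) ^ c - 1) * (2 ^ c + 1) = 2 ^ (2 * c) - 1 := by
  have h1 : (1:ℕ) ≤ 2 ^ c := Nat.one_le_two_pow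
  have h2 : (1:ℕ) ≤ 2 ^ (2 * c) := Nat.one_le_two_pow
  have h3 : (1:ℕ) ≤ 2 ^ c * 2 ^ c := Nat.one_le_iff_ne_zero.mpr (by positivity)
  rw [two_mul, pow_add]
  zify [h1, h3]
  ring

/-- For odd positive `m, k` with `t = gcd(m,k)`, `s = 2^k + 1` and `d = s(2^m - 1) + 1`:
`gcd(d, 2^{2m} - 1) = 1`, `gcd(s, 2^m + 1) = 2^t + 1 > 1`, and `gcd(s-1, 2^m+1) = 1`. -/
theorem cpp_conditions_s_two_pow_add_one (m k n t s d : ℕ)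
    (hm : Odd m) (hk : Odd k) (hm0 : 0 < m) (hk0 : 0 < k)
    (ht : t = Nat.gcd m k) (hn : n = 2 * m)
    (hs : s = 2 ^ k + 1) (hd : d = s * (2 ^ m - 1) + 1) :
    Nat.gcd d (2 ^ n - 1) = 1 ∧
    Nat.gcd s (2 ^ m + 1) = 2 ^ t + 1 ∧ 1 < Nat.gcd s (2 ^ m + 1) ∧
    Nat.gcd (s - 1) (2 ^ m + 1) = 1 := by
  subst hn hs hd
  have h2m1 : (1:ℕ) ≤ 2 ^ m := Nat.one_le_two_pow
  have hoddm : Odd (2 ^ m + 1) := by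
    have : Even ((2:ℕ) ^ m) := (Nat.even_pow' hm0.ne').mpr even_two
    exact this.add_one
  -- key fact: gcd(2^{k+1}+1, 2^m+1) = 1
  have hF2 : Nat.gcd (2 ^ (k + 1) + 1) (2 ^ m + 1) = 1 := by
    set g := Nat.gcd (k + 1) m with hg
    have hgm : g ∣ m := Nat.gcd_dvd_right _ _
    have hgk : g ∣ k + 1 := Nat.gcd_dvd_left _ _
    have hgodd : Odd g := hm.of_dvd_nat hgm
    have h2g : 2 * g ∣ k + 1 := by
      have hcop : Nat.Coprime 2 g := Nat.coprime_two_left.mpr hgodd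
      exact hcop.mul_dvd_of_dvd_of_dvd (hk.add_one.two_dvd) hgk
    set e := Nat.gcd (2 ^ (k + 1) + 1) (2 ^ m + 1) with he
    have he1 : e ∣ 2 ^ (k + 1) + 1 := Nat.gcd_dvd_left _ _
    have he2 : e ∣ 2 ^ m + 1 := Nat.gcd_dvd_right _ _
    have hea : e ∣ 2 ^ (2 * (k + 1)) - 1 :=
      he1.trans (Dvd.intro_left _ prod_eq)
    have heb : e ∣ 2 ^ (2 * m) - 1 := he2.trans (Dvd.intro_left _ prod_eq)
    have hgcd2 : Nat.gcd (2 * (k + 1)) (2 * m) = 2 * g := by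
      rw [Nat.gcd_mul_left]
    have hec : e ∣ 2 ^ (2 * g) - 1 := by
      have := dvd_two_pow_gcd_sub_one hea heb
      rwa [hgcd2] at this
    have hed : e ∣ 2 ^ (k + 1) - 1 := hec.trans (two_pow_sub_one_dvd' h2g)
    have he2' : e ∣ 2 := by
      have h5 := Nat.dvd_sub he1 hed
      have hle : (1:ℕ) ≤ 2 ^ (k + 1) := Nat.one_le_two_pow
      have heq : 2 ^ (k + 1) + 1 - (2 ^ (k + 1) - 1) = 2 := by omega
      rwa [heq] at h5
    have heodd : Odd e := hoddm.of_dvd_nat he2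
    rcases (Nat.dvd_prime Nat.prime_two).mp he2' with h | h
    · exact h
    · exact absurd (h ▸ heodd) (by decide)
  -- key fact: gcd(2^k+1, 2^m+1) = 2^t+1
  have ht0 : 0 < t := ht ▸ Nat.gcd_pos_of_pos_left _ hm0
  have htm : t ∣ m := ht ▸ Nat.gcd_dvd_left m k
  have htk : t ∣ k := ht ▸ Nat.gcd_dvd_right m k
  have hdvd : ∀ a : ℕ, t ∣ a → Odd a → (2:ℕ) ^ t + 1 ∣ 2 ^ a + 1 := by
    intro a hta hodda
    have hoq : Odd (a / t) := by
      rw [← Nat.mul_div_cancel' hta] at hodda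
      exact (Nat.odd_mul.mp hodda).2
    have := hoq.nat_add_dvd_pow_add_pow (2 ^ t) 1
    simpa [← pow_mul, Nat.mul_div_cancel' hta] using this
  have hF3 : Nat.gcd (2 ^ k + 1) (2 ^ m + 1) = 2 ^ t + 1 := by
    set G := Nat.gcd (2 ^ k + 1) (2 ^ m + 1) with hG
    have hG1 : G ∣ 2 ^ k + 1 := Nat.gcd_dvd_left _ _
    have hG2 : G ∣ 2 ^ m + 1 := Nat.gcd_dvd_right _ _
    have hGa : G ∣ 2 ^ (2 * k) - 1 := hG1.trans (Dvd.intro_left _ prod_eq)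
    have hGb : G ∣ 2 ^ (2 * m) - 1 := hG2.trans (Dvd.intro_left _ prod_eq)
    have hGc : G ∣ 2 ^ (2 * t) - 1 := by
      have := dvd_two_pow_gcd_sub_one hGa hGb
      rwa [Nat.gcd_mul_left, ← Nat.gcd_comm m k, ← ht] at this
    have hGcop : Nat.Coprime G (2 ^ t - 1) := by
      have h1 : Nat.gcd G (2 ^ t - 1) ∣ 2 ^ m - 1 :=
        (Nat.gcd_dvd_right _ _).trans (two_pow_sub_one_dvd' htm)
      have h2 : Nat.gcd G (2 ^ t - 1) ∣ 2 ^ m + 1 :=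
        (Nat.gcd_dvd_left _ _).trans hG2
      have h3 : Nat.gcd G (2 ^ t - 1) ∣ 2 := by
        have := Nat.dvd_sub h2 h1
        have heq : 2 ^ m + 1 - (2 ^ m - 1) = 2 := by omega
        rwa [heq] at this
      have h4 : Odd (Nat.gcd G (2 ^ t - 1)) := hoddm.of_dvd_nat h2
      rcases (Nat.dvd_prime Nat.prime_two).mp h3 with h | h
      · exact h
      · exact absurd (h ▸ h4) (by decide)
    have hGdvd : G ∣ 2 ^ t + 1 := by
      have : G ∣ (2 ^ t - 1) * (2 ^ t + 1) := prod_eq ▸ hGc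
      exact (Nat.Coprime.dvd_of_dvd_mul_left hGcop this)
    have hback : (2:ℕ) ^ t + 1 ∣ G :=
      Nat.dvd_gcd (hdvd k htk hk) (hdvd m htm hm)
    exact Nat.dvd_antisymm hGdvd hback
  refine ⟨?_, hF3, ?_, ?_⟩
  · -- gcd(d, 2^{2m}-1) = 1
    have c1 : Nat.Coprime ((2 ^ k + 1) * (2 ^ m - 1) + 1) (2 ^ m - 1) := by
      rw [Nat.Coprime, Nat.gcd_comm, add_comm, Nat.gcd_add_mul_right_right]
      simp
    have c2 : Nat.Coprime ((2 ^ k + 1) * (2 ^ m - 1) + 1) (2 ^ m + 1) := by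
      set dd := (2 ^ k + 1) * (2 ^ m - 1) + 1 with hdd
      clear_value dd
      have hsum : dd + (2 ^ (k + 1) + 1) = (2 ^ k + 1) * (2 ^ m + 1) := by
        have hle : (1:ℕ) ≤ 2 ^ k := Nat.one_le_two_pow
        rw [hdd]
        zify [h2m1]
        ring
      have e1 : Nat.gcd dd (2 ^ m + 1) ∣ dd := Nat.gcd_dvd_left _ _
      have e2 : Nat.gcd dd (2 ^ m + 1) ∣ 2 ^ m + 1 := Nat.gcd_dvd_right _ _
      have e3 : Nat.gcd dd (2 ^ m + 1) ∣ (2 ^ k + 1) * (2 ^ m + 1) := e2.mul_left _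
      have e4 : Nat.gcd dd (2 ^ m + 1) ∣ 2 ^ (k + 1) + 1 := by
        have h6 := Nat.dvd_sub e3 e1
        have heq : (2 ^ k + 1) * (2 ^ m + 1) - dd = 2 ^ (k + 1) + 1 := by
          rw [← hsum, Nat.add_sub_cancel_left]
        rwa [heq] at h6
      have := Nat.dvd_gcd e4 e2
      rw [hF2] at this
      exact Nat.dvd_one.mp this
    have hsplit : 2 ^ (2 * m) - 1 = (2 ^ m - 1) * (2 ^ m + 1) := prod_eq.symm
    rw [hsplit]
    exact Nat.Coprime.mul_right c1 c2
  · rw [hF3]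
    have : (1:ℕ) ≤ 2 ^ t := Nat.one_le_two_pow
    omega
  · -- gcd(2^k, 2^m+1) = 1
    have : Nat.Coprime 2 (2 ^ m + 1) := Nat.coprime_two_left.mpr hoddm
    simpa using (this.pow_left k)
end
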